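/- arXiv:1602.04623 — 2 statements merged into one kernel-verified Lean document; each statement's English description precedes it below -/
import Mathlib

section
/- Every minimum edge clique cover of a chordal graph consisting of maximal cliques is an effective competition cover. -/
/-- A digraph (given by its arc relation) is acyclic if it has no directed cycle. -/
def Digraph.Acyclic {W : Type*} (A : W → W → Prop) : Prop :=
  ∀ v, ¬ Relation.TransGen A v v

/-- The competition graph of a digraph: distinct `x`, `y` are adjacent iff
they have a common out-neighbor. -/
def competitionGraph {W : Type*} (A : W → W → Prop) : SimpleGraph W where
  Adj x y := x ≠ y ∧ ∃ z, A x z ∧ A y z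
  symm := by
    constructor
    rintro x y ⟨h, z, hx, hy⟩
    exact ⟨h.symm, z, hy, hx⟩
  loopless := by
    constructor
    rintro x ⟨h, -⟩
    exact h rfl

/-- `G` together with `k` additional isolated vertices. -/
def addIsolated {V : Type*} (G : SimpleGraph V) (k : ℕ) : SimpleGraph (V ⊕ Fin k) where
  Adj x y := ∃ u v, G.Adj u v ∧ x = Sum.inl u ∧ y = Sum.inl v
  symm := by
    constructor
    rintro x y ⟨u, v, h, rfl, rfl⟩
    exact ⟨v, u, h.symm, rfl, rfl⟩
  loopless := by
    constructor
    rintro x ⟨u, v, h, rfl, hy⟩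
    exact G.loopless.irrefl u (Sum.inl.inj hy ▸ h)

/-- `F` is an edge clique cover of `G`. -/
def IsEdgeCliqueCover {V : Type*} (G : SimpleGraph V) (F : Finset (Set V)) : Prop :=
  (∀ C ∈ F, G.IsClique C) ∧ ∀ u v, G.Adj u v → ∃ C ∈ F, u ∈ C ∧ v ∈ C

/-- The edge clique cover number `θ_e(G)`. -/
noncomputable def eccNumber {V : Type*} (G : SimpleGraph V) : ℕ :=
  sInf {n | ∃ F : Finset (Set V), IsEdgeCliqueCover G F ∧ F.card = n}

/-- An acyclic digraph `A` on `V ⊕ Fin k` realizes `G` with `k` added isolated vertices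
if its competition graph is `G` together with `k` isolated vertices. -/
def Realizes {V : Type*} (G : SimpleGraph V) (k : ℕ)
    (A : (V ⊕ Fin k) → (V ⊕ Fin k) → Prop) : Prop :=
  Digraph.Acyclic A ∧ competitionGraph A = addIsolated G k

/-- The competition number `k(G)`. -/
noncomputable def compNumber {V : Type*} (G : SimpleGraph V) : ℕ :=
  sInf {k | ∃ A : (V ⊕ Fin k) → (V ⊕ Fin k) → Prop, Realizes G k A}

/-- The primary predator index `p(G)`: the maximum number of in-degree-0 vertices over
all acyclic digraphs whose competition graph is `G` plus `k(G)` isolated vertices. -/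
noncomputable def predatorIndex {V : Type*} (G : SimpleGraph V) : ℕ :=
  sSup {n | ∃ A : (V ⊕ Fin (compNumber G)) → (V ⊕ Fin (compNumber G)) → Prop,
    Realizes G (compNumber G) A ∧ {v | ∀ u, ¬ A u v}.ncard = n}

/-- `C` is a maximal clique of `G`. -/
def IsMaximalClique {V : Type*} (G : SimpleGraph V) (C : Set V) : Prop :=
  G.IsClique C ∧ ∀ D : Set V, G.IsClique D → C ⊆ D → C = D

/-- The acyclic digraph `A` accompanies the minimum edge clique cover `𝒞`. -/
def Accompanies {V : Type*} (G : SimpleGraph V) (𝒞 : Finset (Set V))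
    (A : (V ⊕ Fin (compNumber G)) → (V ⊕ Fin (compNumber G)) → Prop) : Prop :=
  Realizes G (compNumber G) A ∧
  ∃ w : 𝒞 → (V ⊕ Fin (compNumber G)), Function.Injective w ∧
    (∀ C : 𝒞, ∀ v ∈ (C : Set V), A (Sum.inl v) (w C)) ∧
    {x | ∃ u, A u x} = Set.range w

/-- `𝒞` is an effective competition cover of `G`. -/
def IsEffectiveCompetitionCover {V : Type*} (G : SimpleGraph V) (𝒞 : Finset (Set V)) : Prop :=
  IsEdgeCliqueCover G 𝒞 ∧ 𝒞.card = eccNumber G ∧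
  (∀ C ∈ 𝒞, IsMaximalClique G C) ∧
  ∃ A : (V ⊕ Fin (compNumber G)) → (V ⊕ Fin (compNumber G)) → Prop, Accompanies G 𝒞 A

/-- The diamond graph: `K₄` minus the edge between vertices `2` and `3`. -/
def diamondGraph : SimpleGraph (Fin 4) where
  Adj i j := i ≠ j ∧ ¬(i = 2 ∧ j = 3) ∧ ¬(i = 3 ∧ j = 2)
  symm := by
    constructor
    rintro i j ⟨h, h1, h2⟩
    exact ⟨h.symm, fun ⟨a, b⟩ => h2 ⟨b, a⟩, fun ⟨a, b⟩ => h1 ⟨b, a⟩⟩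
  loopless := by
    constructor
    rintro i ⟨h, -⟩
    exact h rfl

/-- `G` contains `H` as an induced subgraph. -/
def ContainsInduced {V W : Type*} (G : SimpleGraph V) (H : SimpleGraph W) : Prop :=
  ∃ f : W ↪ V, ∀ a b, G.Adj (f a) (f b) ↔ H.Adj a b

/-- `G` is diamond-free: it has no induced diamond. -/
def DiamondFree {V : Type*} (G : SimpleGraph V) : Prop :=
  ¬ ContainsInduced G diamondGraph

/-- `G` is chordal: it has no induced cycle of length at least `4`. -/
def Chordal {V : Type*} (G : SimpleGraph V) : Prop :=
  ∀ n, 4 ≤ n → ¬ ContainsInduced G (SimpleGraph.cycleGraph n)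

/-- The edge `uv` is occupied by `C`: `C` is the unique maximal clique covering `uv`. -/
def Occupies {V : Type*} (G : SimpleGraph V) (C : Set V) (u v : V) : Prop :=
  G.Adj u v ∧ IsMaximalClique G C ∧ u ∈ C ∧ v ∈ C ∧
    ∀ C' : Set V, IsMaximalClique G C' → u ∈ C' → v ∈ C' → C' = C

section AuxDev
universe u
open Relation

variable {V : Type u}

def IsPathOn (G : SimpleGraph V) (T : Set V) (x y : V) (N : ℕ) (u : ℕ → V) : Prop :=
  u 0 = x ∧ u N = y ∧ (∀ i, i < N → G.Adj (u i) (u (i + 1))) ∧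
    (∀ i, 0 < i → i < N → u i ∈ T)

def Simplicial (G : SimpleGraph V) (v : V) : Prop := G.IsClique {u | G.Adj v u}

def rOut (G : SimpleGraph V) (S : Finset V) : V → V → Prop :=
  fun p q => G.Adj p q ∧ p ∉ S ∧ q ∉ S

lemma rOut_symm {G : SimpleGraph V} {S : Finset V} : Symmetric (rOut G S) :=
  fun _ _ ⟨h, h1, h2⟩ => ⟨h.symm, h2, h1⟩

lemma rtg_to_path {r : V → V → Prop} {x y : V} (h : ReflTransGen r x y) :
    ∃ N : ℕ, ∃ u : ℕ → V, u 0 = x ∧ u N = y ∧ (∀ i, i < N → r (u i) (u (i + 1))) ∧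
      (∀ i, i ≤ N → ReflTransGen r x (u i)) := by
  induction h with
  | refl => exact ⟨0, fun _ => x, rfl, rfl, by omega, fun i _ => ReflTransGen.refl⟩
  | @tail b c hab hr ih =>
    obtain ⟨N, u, h0, hN, hadj, hreach⟩ := ih
    refine ⟨N + 1, fun i => if i ≤ N then u i else c, by simp [h0], by simp, ?_, ?_⟩
    · intro i hi
      by_cases hiN : i < N
      · simpa [Nat.le_of_lt hiN, Nat.le_of_lt_succ (by omega : i + 1 < N + 1 + 1),
          show i + 1 ≤ N by omega] using hadj i hiN
      · have hiN' : i = N := by omega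
        show r (if i ≤ N then u i else c) (if i + 1 ≤ N then u (i + 1) else c)
        rw [if_pos (by omega : i ≤ N), if_neg (by omega), hiN', hN]
        exact hr
    · intro i hi
      by_cases hiN : i ≤ N
      · simpa [hiN] using hreach i hiN
      · have hiN' : i = N + 1 := by omega
        show ReflTransGen r x (if i ≤ N then u i else c)
        rw [if_neg (by omega)]
        exact (hreach N le_rfl).tail (hN ▸ hr)

/-- In an acyclic digraph on a finite type there is a vertex with no out-neighbour. -/

lemma exists_sink {W : Type*} [Finite W] [Nonempty W] {A : W → W → Prop}
    (hA : Digraph.Acyclic A) : ∃ x, ∀ y, ¬ A x y := by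
  by_contra h
  push_neg at h
  choose f hf using h
  set g : ℕ → W := fun n => f^[n] (Classical.arbitrary W) with hg
  have hstep : ∀ n, A (g n) (g (n + 1)) := by
    intro n; rw [hg]; simp only [Function.iterate_succ_apply']; exact hf _
  have htrans : ∀ m n, m < n → Relation.TransGen A (g m) (g n) := by
    intro m n hmn
    induction n with
    | zero => omega
    | succ k ih =>
      rcases Nat.lt_succ_iff_lt_or_eq.mp hmn with hk | hk
      · exact (ih hk).tail (hstep k)
      · subst hk; exact Relation.TransGen.single (hstep m)
  obtain ⟨m, n, hmn, heq⟩ := Finite.exists_ne_map_eq_of_infinite g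
  rcases Nat.lt_or_ge m n with h' | h'
  · exact hA (g m) (heq ▸ htrans m n h')
  · exact hA (g n) (heq ▸ htrans n m (by omega))

/-- A relation admitting a strictly monotone measure is acyclic. -/

lemma acyclic_of_measure {W : Type*} {A : W → W → Prop} (g : W → ℕ)
    (hg : ∀ x y, A x y → g x < g y) : Digraph.Acyclic A := by
  intro v hv
  have : ∀ x y, Relation.TransGen A x y → g x < g y := by
    intro x y h
    induction h with
    | single h => exact hg _ _ h
    | tail _ h ih => exact ih.trans (hg _ _ h)
  exact absurd (this v v hv) (lt_irrefl _)

lemma shorter_of_adj {G : SimpleGraph V} {T : Set V} {x y : V} {N : ℕ} {u : ℕ → V}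
    (hp : IsPathOn G T x y N u) {i j : ℕ} (hij : i + 2 ≤ j) (hjN : j ≤ N)
    (hadj : G.Adj (u i) (u j)) :
    ∃ N' u', IsPathOn G T x y N' u' ∧ N' < N := by
  obtain ⟨h0, hN, hstep, hint⟩ := hp
  refine ⟨N - (j - i) + 1, fun t => if t ≤ i then u t else u (t - i - 1 + j),
    ⟨?_, ?_, ?_, ?_⟩, by omega⟩
  · simpa using h0
  · have h1 : ¬ (N - (j - i) + 1 ≤ i) := by omega
    have h2 : N - (j - i) + 1 - i - 1 + j = N := by omega
    simp only [if_neg h1, h2, hN]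
  · intro t ht
    by_cases h1 : t + 1 ≤ i
    · simpa [h1, show t ≤ i by omega] using hstep t (by omega)
    · by_cases h2 : t ≤ i
      · have : t = i := by omega
        subst this
        simpa [h2, h1, show t + 1 - t - 1 + j = j by omega] using hadj
      · have e1 : t + 1 - i - 1 + j = (t - i - 1 + j) + 1 := by omega
        simp only [if_neg h1, if_neg h2, e1]
        exact hstep _ (by omega)
  · intro t ht0 htN
    by_cases h2 : t ≤ i
    · simpa [h2] using hint t ht0 (by omega)
    · simp only [if_neg h2]
      exact hint _ (by omega) (by omega)

lemma shorter_of_eq {G : SimpleGraph V} {T : Set V} {x y : V} {N : ℕ} {u : ℕ → V}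
    (hp : IsPathOn G T x y N u) {i j : ℕ} (h0i : 0 < i) (hij : i < j) (hjN : j < N)
    (heq : u i = u j) :
    ∃ N' u', IsPathOn G T x y N' u' ∧ N' < N := by
  obtain ⟨h0, hN, hstep, hint⟩ := hp
  refine ⟨N - (j - i), fun t => if t ≤ i then u t else u (t + (j - i)),
    ⟨?_, ?_, ?_, ?_⟩, by omega⟩
  · simpa using h0
  · have h1 : ¬ (N - (j - i) ≤ i) := by omega
    have h2 : N - (j - i) + (j - i) = N := by omega
    simp only [if_neg h1, h2, hN]
  · intro t ht
    by_cases h1 : t + 1 ≤ i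
    · simpa [h1, show t ≤ i by omega] using hstep t (by omega)
    · by_cases h2 : t ≤ i
      · have hti : t = i := by omega
        have e1 : t + 1 + (j - i) = j + 1 := by omega
        simp only [if_pos h2, if_neg h1, e1, hti, heq]
        rw [if_pos le_rfl, if_neg (by omega), show i + 1 + (j - i) = j + 1 by omega]
        exact hstep j hjN
      · have e1 : t + 1 + (j - i) = (t + (j - i)) + 1 := by omega
        simp only [if_neg h1, if_neg h2, e1]
        exact hstep _ (by omega)
  · intro t ht0 htN
    by_cases h2 : t ≤ i
    · simpa [h2] using hint t ht0 (by omega)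
    · simp only [if_neg h2]
      exact hint _ (by omega) (by omega)

/-- A minimum-length walk with interior in `T` is an induced path. -/

lemma exists_min_path {G : SimpleGraph V} {T : Set V} {x y : V}
    (h : ∃ N u, IsPathOn G T x y N u) :
    ∃ N u, IsPathOn G T x y N u ∧
      (∀ i j, i + 2 ≤ j → j ≤ N → ¬ G.Adj (u i) (u j)) ∧
      (∀ i j, 0 < i → i < j → j < N → u i ≠ u j) := by
  set s : Set ℕ := {m | ∃ u, IsPathOn G T x y m u} with hs
  have hne : s.Nonempty := by obtain ⟨N, u, hu⟩ := h; exact ⟨N, u, hu⟩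
  obtain ⟨u, hu⟩ := Nat.sInf_mem hne
  refine ⟨sInf s, u, hu, ?_, ?_⟩
  · intro i j hij hjN hadj
    obtain ⟨N', u', hp', hlt⟩ := shorter_of_adj hu hij hjN hadj
    have hmem : N' ∈ s := ⟨u', hp'⟩
    exact absurd (Nat.sInf_le hmem) (by omega)
  · intro i j h0i hij hjN heq
    obtain ⟨N', u', hp', hlt⟩ := shorter_of_eq hu h0i hij hjN heq
    have hmem : N' ∈ s := ⟨u', hp'⟩
    exact absurd (Nat.sInf_le hmem) (by omega)

lemma cycle_adj_iff {n : ℕ} (h4 : 4 ≤ n) {i j : Fin n} (hlt : i.val < j.val) :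
    (SimpleGraph.cycleGraph n).Adj i j ↔
      (j.val = i.val + 1 ∨ (i.val = 0 ∧ j.val = n - 1)) := by
  have hi : i.val < n := i.isLt
  have hj : j.val < n := j.isLt
  rw [SimpleGraph.cycleGraph_adj']
  rw [Fin.sub_def, Fin.sub_def]
  simp only [Fin.val_mk]
  have e1 : (n - ↑j + ↑i) % n = n - ↑j + ↑i := Nat.mod_eq_of_lt (by omega)
  have e2 : (n - ↑i + ↑j) % n = ↑j - ↑i := by
    rw [show n - ↑i + ↑j = (↑j - ↑i) + n from by omega, Nat.add_mod_right]
    exact Nat.mod_eq_of_lt (by omega)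
  rw [e1, e2]
  omega

lemma cycle_contains {G : SimpleGraph V} {P Q : Set V} {x y : V} {s t : ℕ} {u v : ℕ → V}
    (hxy : x ≠ y) (hnadj : ¬ G.Adj x y)
    (hxP : x ∉ P) (hyP : y ∉ P) (hxQ : x ∉ Q) (hyQ : y ∉ Q)
    (hPQ : ∀ p ∈ P, ∀ q ∈ Q, p ≠ q ∧ ¬ G.Adj p q)
    (hs : 2 ≤ s) (ht : 2 ≤ t)
    (hu : IsPathOn G P x y s u)
    (hu1 : ∀ i j, i + 2 ≤ j → j ≤ s → ¬ G.Adj (u i) (u j))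
    (hu2 : ∀ i j, 0 < i → i < j → j < s → u i ≠ u j)
    (hv : IsPathOn G Q x y t v)
    (hv1 : ∀ i j, i + 2 ≤ j → j ≤ t → ¬ G.Adj (v i) (v j))
    (hv2 : ∀ i j, 0 < i → i < j → j < t → v i ≠ v j) :
    ContainsInduced G (SimpleGraph.cycleGraph (s + t)) := by
  obtain ⟨hu0, hus, hust, huint⟩ := hu
  obtain ⟨hv0, hvt, hvst, hvint⟩ := hv
  set f' : ℕ → V := fun a => if a ≤ s then u a else v (s + t - a) with hf'
  have fval_le : ∀ a, a ≤ s → f' a = u a := fun a ha => if_pos ha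
  have fval_gt : ∀ a, s < a → f' a = v (s + t - a) := fun a ha => if_neg (by omega)
  have key_ne : ∀ a b, a < b → b < s + t → f' a ≠ f' b := by
    intro a b hab hbn
    by_cases hbs : b ≤ s
    · rw [fval_le a (by omega), fval_le b hbs]
      rcases Nat.eq_zero_or_pos a with ha0 | ha0
      · subst ha0
        rw [hu0]
        rcases eq_or_lt_of_le hbs with hbs' | hbs'
        · rw [hbs', hus]; exact hxy
        · intro hcon; exact hxP (hcon ▸ huint b (by omega) hbs')
      · rcases eq_or_lt_of_le hbs with hbs' | hbs'
        · intro hcon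
          exact hyP ((hbs' ▸ hus : u b = y) ▸ hcon ▸ huint a ha0 (by omega))
        · exact hu2 a b ha0 hab hbs'
    · by_cases has : a ≤ s
      · have hbQ : v (s + t - b) ∈ Q := hvint _ (by omega) (by omega)
        rw [fval_le a has, fval_gt b (by omega)]
        rcases Nat.eq_zero_or_pos a with ha0 | ha0
        · subst ha0; rw [hu0]
          intro hcon; exact hxQ (hcon ▸ hbQ)
        · rcases eq_or_lt_of_le has with has' | has'
          · rw [has', hus]
            intro hcon; exact hyQ (hcon ▸ hbQ)
          · exact (hPQ (u a) (huint a ha0 has') _ hbQ).1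
      · rw [fval_gt a (by omega), fval_gt b (by omega)]
        exact (hv2 (s + t - b) (s + t - a) (by omega) (by omega) (by omega)).symm
  have key_adj : ∀ a b, a < b → b < s + t →
      (G.Adj (f' a) (f' b) ↔ (b = a + 1 ∨ (a = 0 ∧ b = s + t - 1))) := by
    intro a b hab hbn
    by_cases hbs : b ≤ s
    · rw [fval_le a (by omega), fval_le b hbs]
      constructor
      · intro hadj
        left
        by_contra hcon
        exact hu1 a b (by omega) hbs hadj
      · rintro (rfl | ⟨ha0, hb⟩)
        · exact hust a (by omega)
        · exact absurd hb (by omega)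
    · by_cases has : a ≤ s
      · have hbQ : v (s + t - b) ∈ Q := hvint _ (by omega) (by omega)
        rw [fval_le a has, fval_gt b (by omega)]
        rcases Nat.eq_zero_or_pos a with ha0 | ha0
        · subst ha0
          rw [hu0, ← hv0]
          constructor
          · intro hadj
            right
            refine ⟨rfl, ?_⟩
            by_contra hcon
            exact hv1 0 (s + t - b) (by omega) (by omega) hadj
          · rintro (h1 | ⟨-, hb⟩)
            · exact absurd h1 (by omega)
            · rw [show s + t - b = 0 + 1 by omega]
              exact hvst 0 (by omega)
        · rcases eq_or_lt_of_le has with has' | has'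
          · rw [has', hus, ← hvt]
            constructor
            · intro hadj
              left
              by_contra hcon
              exact hv1 (s + t - b) t (by omega) le_rfl hadj.symm
            · rintro (hb | ⟨ha0', -⟩)
              · rw [show s + t - b = t - 1 by omega]
                have := hvst (t - 1) (by omega)
                rw [show t - 1 + 1 = t by omega] at this
                exact this.symm
              · exact absurd ha0' (by omega)
          · refine iff_of_false ?_ (by omega)
            exact (hPQ (u a) (huint a ha0 has') _ hbQ).2
      · rw [fval_gt a (by omega), fval_gt b (by omega)]
        constructor
        · intro hadj
          left
          by_contra hcon
          exact hv1 (s + t - b) (s + t - a) (by omega) (by omega) hadj.symm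
        · rintro (hb | ⟨ha0, -⟩)
          · have := hvst (s + t - b) (by omega)
            rw [show s + t - b + 1 = s + t - a by omega] at this
            exact this.symm
          · exact absurd ha0 (by omega)
  have h4 : 4 ≤ s + t := by omega
  refine ⟨⟨fun i => f' i.val, ?_⟩, ?_⟩
  · intro i j hij
    rcases lt_trichotomy i.val j.val with h | h | h
    · exact absurd hij (key_ne _ _ h j.isLt)
    · exact Fin.ext h
    · exact absurd hij.symm (key_ne _ _ h i.isLt)
  · intro i j
    rcases lt_trichotomy i.val j.val with h | h | h
    · exact (key_adj i.val j.val h j.isLt).trans (cycle_adj_iff h4 h).symm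
    · have : i = j := Fin.ext h
      subst this
      exact iff_of_false (G.loopless.irrefl _) ((SimpleGraph.cycleGraph _).loopless.irrefl i)
    · have hrev : G.Adj (f' j.val) (f' i.val) ↔ (SimpleGraph.cycleGraph (s + t)).Adj j i :=
        (key_adj j.val i.val h i.isLt).trans (cycle_adj_iff h4 h).symm
      constructor
      · intro hadj; exact (hrev.mp hadj.symm).symm
      · intro hadj; exact (hrev.mpr hadj.symm).symm

lemma chordal_induce {G : SimpleGraph V} (hG : Chordal G) (W : Set V) :
    Chordal (G.induce W) := by
  intro n hn ⟨f, hf⟩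
  refine hG n hn ⟨f.trans (Function.Embedding.subtype _), fun a b => ?_⟩
  exact (SimpleGraph.comap_adj.symm.trans (hf a b) : _)



lemma exists_pathOn_of_rtg {G : SimpleGraph V} {T : Set V} {x y zx zy : V}
    (hadjx : G.Adj x zx) (hadjy : G.Adj zy y)
    {r' : V → V → Prop} (hr' : ∀ p q, r' p q → G.Adj p q)
    (hrtg : ReflTransGen r' zx zy)
    (hT : ∀ z, ReflTransGen r' zx z → z ∈ T) :
    ∃ N w, IsPathOn G T x y N w := by
  obtain ⟨N, w, h0, hN, hstep, hreach⟩ := rtg_to_path hrtg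
  refine ⟨N + 2, fun i => if i = 0 then x else if i ≤ N + 1 then w (i - 1) else y,
    by simp, ?_, ?_, ?_⟩
  · show (if N + 2 = 0 then x else if N + 2 ≤ N + 1 then w (N + 2 - 1) else y) = y
    rw [if_neg (by omega), if_neg (by omega)]
  · intro i hi
    rcases Nat.eq_zero_or_pos i with h0' | h0'
    · subst h0'
      show G.Adj (if 0 = 0 then x else _) (if 0 + 1 = 0 then x else if 0 + 1 ≤ N + 1 then w (0 + 1 - 1) else y)
      rw [if_pos rfl, if_neg (by omega), if_pos (by omega)]
      simpa [h0] using hadjx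
    · by_cases hiN : i ≤ N
      · show G.Adj (if i = 0 then x else if i ≤ N + 1 then w (i - 1) else y)
          (if i + 1 = 0 then x else if i + 1 ≤ N + 1 then w (i + 1 - 1) else y)
        rw [if_neg (by omega), if_pos (by omega), if_neg (by omega), if_pos (by omega)]
        have := hr' _ _ (hstep (i - 1) (by omega))
        rwa [show i - 1 + 1 = i + 1 - 1 from by omega] at this
      · have hieq : i = N + 1 := by omega
        subst hieq
        show G.Adj (if N + 1 = 0 then x else if N + 1 ≤ N + 1 then w (N + 1 - 1) else y)
          (if N + 1 + 1 = 0 then x else if N + 1 + 1 ≤ N + 1 then w (N + 1 + 1 - 1) else y)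
        rw [if_neg (by omega), if_pos (by omega), if_neg (by omega), if_neg (by omega)]
        simpa [show N + 1 - 1 = N from by omega, hN] using hadjy
  · intro i h0' hiN
    show (if i = 0 then x else if i ≤ N + 1 then w (i - 1) else y) ∈ T
    rw [if_neg (by omega), if_pos (by omega)]
    exact hT _ (hreach (i - 1) (by omega))

lemma reach_adj [DecidableEq V] {G : SimpleGraph V} {S : Finset V} {x a b : V}
    (hrtg : ReflTransGen (rOut G (S.erase x)) a b) (ha : a ∉ S)
    (hnb : ¬ ReflTransGen (rOut G S) a b) :
    ∃ z, ReflTransGen (rOut G S) a z ∧ G.Adj z x := by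
  revert ha hnb
  induction hrtg using Relation.ReflTransGen.head_induction_on with
  | refl => intro _ hnb; exact absurd Relation.ReflTransGen.refl hnb
  | @head a' c' hstep htail ih =>
    intro ha' hnb
    obtain ⟨hadj, h1, h2⟩ := hstep
    by_cases hcx : c' = x
    · exact ⟨a', Relation.ReflTransGen.refl, hcx ▸ hadj⟩
    · have hc'S : c' ∉ S := fun hc' => h2 (Finset.mem_erase.mpr ⟨hcx, hc'⟩)
      by_cases hrb : ReflTransGen (rOut G S) c' b
      · exact absurd (Relation.ReflTransGen.head ⟨hadj, ha', hc'S⟩ hrb) hnb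
      · obtain ⟨z, hz1, hz2⟩ := ih hc'S hrb
        exact ⟨z, Relation.ReflTransGen.head ⟨hadj, ha', hc'S⟩ hz1, hz2⟩

lemma side_simplicial [Fintype V] {G : SimpleGraph V} {n : ℕ}
    (ih : ∀ (V' : Type u) [Fintype V'] (G' : SimpleGraph V'), Fintype.card V' ≤ n → Chordal G' →
      (∀ v w : V', v ≠ w → G'.Adj v w) ∨
      ∃ v w : V', v ≠ w ∧ ¬ G'.Adj v w ∧ Simplicial G' v ∧ Simplicial G' w)
    (hG : Chordal G) (A : Set V) (S : Finset V) (a b : V)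
    (ha : a ∈ A)
    (hSclique : ∀ x ∈ S, ∀ y ∈ S, x ≠ y → G.Adj x y)
    (hclose : ∀ z ∈ A, ∀ w, G.Adj z w → w ∉ S → w ∈ A)
    (hb1 : b ∉ A) (hb2 : b ∉ S)
    (hcard : Fintype.card V ≤ n + 1) :
    ∃ v ∈ A, Simplicial G v := by
  classical
  set W : Set V := A ∪ ↑S with hW
  have hbW : b ∉ W := by
    intro h
    rcases h with h | h
    · exact hb1 h
    · exact hb2 h
  have hcW : Fintype.card ↥W ≤ n := by
    have h1 : Fintype.card ↥W < Fintype.card V := by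
      convert Fintype.card_subtype_lt (p := fun z => z ∈ W) hbW using 2
    omega
  have hWchordal := chordal_induce hG W
  have hnbr : ∀ z ∈ A, ∀ w, G.Adj z w → w ∈ W := by
    intro z hz w hw
    by_cases hwS : w ∈ S
    · exact Or.inr hwS
    · exact Or.inl (hclose z hz w hw hwS)
  rcases ih ↥W (G.induce W) hcW hWchordal with hcomp | ⟨v1, v2, hne, hnadj, hs1, hs2⟩
  · refine ⟨a, ha, ?_⟩
    intro w1 hw1 w2 hw2 hnew
    have hw1W : w1 ∈ W := hnbr a ha w1 hw1
    have hw2W : w2 ∈ W := hnbr a ha w2 hw2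
    exact (hcomp ⟨w1, hw1W⟩ ⟨w2, hw2W⟩ (fun h => hnew (congrArg Subtype.val h)) : G.Adj w1 w2)
  · have hkey : ∀ (v : ↥W), (v : V) ∈ A → Simplicial (G.induce W) v → Simplicial G (v : V) := by
      intro v hvA hsv w1 hw1 w2 hw2 hnew
      have hw1W : w1 ∈ W := hnbr v hvA w1 hw1
      have hw2W : w2 ∈ W := hnbr v hvA w2 hw2
      have h1 : (⟨w1, hw1W⟩ : ↥W) ∈ {u : ↥W | (G.induce W).Adj v u} := hw1
      have h2 : (⟨w2, hw2W⟩ : ↥W) ∈ {u : ↥W | (G.induce W).Adj v u} := hw2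
      exact (hsv h1 h2 (fun h => hnew (congrArg Subtype.val h)) : G.Adj w1 w2)
    have hor : (v1 : V) ∈ A ∨ (v2 : V) ∈ A := by
      by_contra hc
      push_neg at hc
      have h1 : (v1 : V) ∈ S := by
        rcases v1.2 with h | h
        · exact absurd h hc.1
        · exact h
      have h2 : (v2 : V) ∈ S := by
        rcases v2.2 with h | h
        · exact absurd h hc.2
        · exact h
      have : G.Adj (v1 : V) (v2 : V) :=
        hSclique _ h1 _ h2 (fun h => hne (Subtype.ext h))
      exact hnadj this
    rcases hor with h | h
    · exact ⟨v1, h, hkey v1 h hs1⟩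
    · exact ⟨v2, h, hkey v2 h hs2⟩

theorem dirac_aux : ∀ (n : ℕ) (V : Type u) [Fintype V] (G : SimpleGraph V),
    Fintype.card V ≤ n → Chordal G →
    (∀ v w : V, v ≠ w → G.Adj v w) ∨
    (∃ v w : V, v ≠ w ∧ ¬ G.Adj v w ∧ Simplicial G v ∧ Simplicial G w) := by
  intro n
  induction n with
  | zero =>
    intro V _ G hcard _
    left
    intro v
    have : IsEmpty V := Fintype.card_eq_zero_iff.mp (Nat.le_zero.mp hcard)
    exact isEmptyElim v
  | succ n ih =>
    intro V _ G hcard hG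
    classical
    by_cases hcomp : ∀ v w : V, v ≠ w → G.Adj v w
    · exact Or.inl hcomp
    right
    push_neg at hcomp
    obtain ⟨a, b, hab, hnadj⟩ := hcomp
    set P : Finset V → Prop :=
      fun S => a ∉ S ∧ b ∉ S ∧ ¬ ReflTransGen (rOut G S) a b with hPdef
    have hS0 : P (Finset.univ \ {a, b}) := by
      refine ⟨by simp, by simp [hab], ?_⟩
      intro h
      rcases Relation.ReflTransGen.cases_head h with h' | ⟨c, ⟨hadj, _, hc⟩, _⟩
      · exact hab h'
      · have : c = a ∨ c = b := by
          by_cases h' : c = a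
          · exact Or.inl h'
          · exact Or.inr (by simpa [h'] using hc)
        rcases this with h'' | h''
        · exact G.loopless.irrefl a (h'' ▸ hadj)
        · exact hnadj (h'' ▸ hadj)
    have hfam : ((Finset.univ : Finset (Finset V)).filter P).Nonempty :=
      ⟨_, Finset.mem_filter.mpr ⟨Finset.mem_univ _, hS0⟩⟩
    obtain ⟨S, hSmem, hSmin⟩ := Finset.exists_min_image _ Finset.card hfam
    obtain ⟨haS, hbS, hnreach⟩ : P S := (Finset.mem_filter.mp hSmem).2
    set A : Set V := {z | ReflTransGen (rOut G S) a z} with hA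
    set B : Set V := {z | ReflTransGen (rOut G S) b z} with hB
    have haA : a ∈ A := Relation.ReflTransGen.refl
    have hbB : b ∈ B := Relation.ReflTransGen.refl
    have hAnS : ∀ z ∈ A, z ∉ S := by
      intro z hz
      have hz' : ReflTransGen (rOut G S) a z := hz
      induction hz' with
      | refl => exact haS
      | tail _ hstep _ => exact hstep.2.2
    have hBnS : ∀ z ∈ B, z ∉ S := by
      intro z hz
      have hz' : ReflTransGen (rOut G S) b z := hz
      induction hz' with
      | refl => exact hbS
      | tail _ hstep _ => exact hstep.2.2
    have hAB : ∀ z, z ∈ A → z ∈ B → False := by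
      intro z h1 h2
      exact hnreach (Relation.ReflTransGen.trans h1 ((@Relation.ReflTransGen.stdSymm _ _ ⟨fun _ _ h => rOut_symm h⟩).symm _ _ h2))
    have hclA : ∀ z ∈ A, ∀ w, G.Adj z w → w ∉ S → w ∈ A :=
      fun z hz w hadj hwS => Relation.ReflTransGen.tail hz ⟨hadj, hAnS z hz, hwS⟩
    have hclB : ∀ z ∈ B, ∀ w, G.Adj z w → w ∉ S → w ∈ B :=
      fun z hz w hadj hwS => Relation.ReflTransGen.tail hz ⟨hadj, hBnS z hz, hwS⟩
    have hreach' : ∀ x ∈ S, ReflTransGen (rOut G (S.erase x)) a b := by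
      intro x hx
      have hcard' : (S.erase x).card < S.card := Finset.card_erase_lt_of_mem hx
      have hPS' : ¬ P (S.erase x) := by
        intro hP'
        have := hSmin (S.erase x) (Finset.mem_filter.mpr ⟨Finset.mem_univ _, hP'⟩)
        omega
      by_contra hc
      exact hPS' ⟨fun h => haS (Finset.mem_of_mem_erase h),
        fun h => hbS (Finset.mem_of_mem_erase h), hc⟩
    have hnbrA : ∀ x ∈ S, ∃ z ∈ A, G.Adj z x := by
      intro x hx
      obtain ⟨z, hz1, hz2⟩ := reach_adj (hreach' x hx) haS hnreach
      exact ⟨z, hz1, hz2⟩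
    have hnbrB : ∀ x ∈ S, ∃ z ∈ B, G.Adj z x := by
      intro x hx
      have h1 : ReflTransGen (rOut G (S.erase x)) b a :=
        (@Relation.ReflTransGen.stdSymm _ _ ⟨fun _ _ h => rOut_symm h⟩).symm _ _ (hreach' x hx)
      have h2 : ¬ ReflTransGen (rOut G S) b a :=
        fun h => hnreach ((@Relation.ReflTransGen.stdSymm _ _ ⟨fun _ _ h => rOut_symm h⟩).symm _ _ h)
      obtain ⟨z, hz1, hz2⟩ := reach_adj h1 hbS h2
      exact ⟨z, hz1, hz2⟩
    have hPQ : ∀ p ∈ A, ∀ q ∈ B, p ≠ q ∧ ¬ G.Adj p q := by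
      intro p hp q hq
      constructor
      · intro h; exact hAB p hp (h ▸ hq)
      · intro hadj
        exact hnreach ((Relation.ReflTransGen.tail hp ⟨hadj, hAnS p hp, hBnS q hq⟩).trans
          ((@Relation.ReflTransGen.stdSymm _ _ ⟨fun _ _ h => rOut_symm h⟩).symm _ _ hq))
    have hSclique : ∀ x ∈ S, ∀ y ∈ S, x ≠ y → G.Adj x y := by
      intro x hx y hy hxy
      by_contra hnxy
      obtain ⟨zx, hzxA, hzxadj⟩ := hnbrA x hx
      obtain ⟨zy, hzyA, hzyadj⟩ := hnbrA y hy
      obtain ⟨zx', hzxB, hzxadj'⟩ := hnbrB x hx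
      obtain ⟨zy', hzyB, hzyadj'⟩ := hnbrB y hy
      have hrtgA : ReflTransGen (rOut G S) zx zy :=
        ((@Relation.ReflTransGen.stdSymm _ _ ⟨fun _ _ h => rOut_symm h⟩).symm _ _ hzxA).trans hzyA
      have hrtgB : ReflTransGen (rOut G S) zx' zy' :=
        ((@Relation.ReflTransGen.stdSymm _ _ ⟨fun _ _ h => rOut_symm h⟩).symm _ _ hzxB).trans hzyB
      have hpathA : ∃ N w, IsPathOn G A x y N w :=
        exists_pathOn_of_rtg hzxadj.symm hzyadj (fun p q h => h.1) hrtgA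
          (fun z hz => hzxA.trans hz)
      have hpathB : ∃ N w, IsPathOn G B x y N w :=
        exists_pathOn_of_rtg hzxadj'.symm hzyadj' (fun p q h => h.1) hrtgB
          (fun z hz => hzxB.trans hz)
      obtain ⟨s, uu, hu, hu1, hu2⟩ := exists_min_path hpathA
      obtain ⟨t, vv, hv, hv1, hv2⟩ := exists_min_path hpathB
      have hxA : x ∉ A := fun h => hAnS x h hx
      have hyA : y ∉ A := fun h => hAnS y h hy
      have hxB : x ∉ B := fun h => hBnS x h hx
      have hyB : y ∉ B := fun h => hBnS y h hy
      have hs2 : 2 ≤ s := by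
        by_contra hs'
        push_neg at hs'
        match s, hs' with
        | 0, _ => exact hxy (hu.1.symm.trans hu.2.1)
        | 1, _ => exact hnxy (hu.1 ▸ hu.2.1 ▸ hu.2.2.1 0 (by omega))
      have ht2 : 2 ≤ t := by
        by_contra ht'
        push_neg at ht'
        match t, ht' with
        | 0, _ => exact hxy (hv.1.symm.trans hv.2.1)
        | 1, _ => exact hnxy (hv.1 ▸ hv.2.1 ▸ hv.2.2.1 0 (by omega))
      exact hG (s + t) (by omega)
        (cycle_contains hxy hnxy hxA hyA hxB hyB hPQ hs2 ht2 hu hu1 hu2 hv hv1 hv2)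
    have hbA : b ∉ A := fun h => hnreach h
    have haB : a ∉ B := fun h => hnreach ((@Relation.ReflTransGen.stdSymm _ _ ⟨fun _ _ h => rOut_symm h⟩).symm _ _ h)
    obtain ⟨vA, hvA, hsA⟩ := side_simplicial ih hG A S a b haA hSclique hclA hbA hbS hcard
    obtain ⟨vB, hvB, hsB⟩ := side_simplicial ih hG B S b a hbB hSclique hclB haB haS hcard
    refine ⟨vA, vB, ?_, (hPQ vA hvA vB hvB).2, hsA, hsB⟩
    exact (hPQ vA hvA vB hvB).1

theorem exists_simplicial {V : Type u} [Fintype V] (G : SimpleGraph V) (hG : Chordal G)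
    [Nonempty V] : ∃ v, Simplicial G v := by
  rcases dirac_aux (Fintype.card V) V G le_rfl hG with hcomp | ⟨v, _, _, _, hs, _⟩
  · refine ⟨Classical.arbitrary V, ?_⟩
    intro w1 hw1 w2 hw2 hne
    exact hcomp w1 w2 hne
  · exact ⟨v, hs⟩

lemma exists_private_vertex [Fintype V] {G : SimpleGraph V} (hG : Chordal G)
    (S : Finset (Set V)) (hmax : ∀ C ∈ S, IsMaximalClique G C) (hne : ∀ C ∈ S, C.Nonempty)
    (hS : S.Nonempty) :
    ∃ C ∈ S, ∃ x ∈ C, ∀ C' ∈ S, C' ≠ C → x ∉ C' := by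
  classical
  by_contra hcon
  push_neg at hcon
  set W : Set V := {v | ∃ C ∈ S, v ∈ C} with hWdef
  have hWne : W.Nonempty := by
    obtain ⟨C, hC⟩ := hS
    obtain ⟨x, hx⟩ := hne C hC
    exact ⟨x, C, hC, hx⟩
  haveI : Nonempty ↥W := hWne.to_subtype
  obtain ⟨v, hv⟩ := exists_simplicial (G.induce W) (chordal_induce hG W)
  obtain ⟨C, hCS, hvC⟩ := v.2
  set K : Set V := {u | u ∈ W ∧ (u = ↑v ∨ G.Adj ↑v u)} with hK
  have hKclique : G.IsClique K := by
    intro p hp q hq hpq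
    rcases hp.2 with hp' | hp'
    · rcases hq.2 with hq' | hq'
      · exact absurd (hp'.trans hq'.symm) hpq
      · exact hp' ▸ hq'
    · rcases hq.2 with hq' | hq'
      · exact (hq' ▸ hp').symm
      · have h1 : (⟨p, hp.1⟩ : ↥W) ∈ {u : ↥W | (G.induce W).Adj v u} := hp'
        have h2 : (⟨q, hq.1⟩ : ↥W) ∈ {u : ↥W | (G.induce W).Adj v u} := hq'
        exact (hv h1 h2 (fun h => hpq (congrArg Subtype.val h)) : G.Adj p q)
  have hsubK : ∀ C' ∈ S, (v : V) ∈ C' → C' ⊆ K := by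
    intro C' hC' hvC' u hu
    refine ⟨⟨C', hC', hu⟩, ?_⟩
    by_cases h : u = ↑v
    · exact Or.inl h
    · exact Or.inr ((hmax C' hC').1 hvC' hu (fun hh => h hh.symm))
  have hCeqK : C = K := (hmax C hCS).2 K hKclique (hsubK C hCS hvC)
  obtain ⟨C', hC'S, hC'ne, hvC'⟩ := hcon C hCS ↑v hvC
  have : C' = C := by
    refine (hmax C' hC'S).2 C ?_ ?_
    · exact (hmax C hCS).1
    · rw [hCeqK]
      exact hsubK C' hC'S hvC'
  exact hC'ne this

lemma greedy_order [Fintype V] [Nonempty V] {G : SimpleGraph V} (hG : Chordal G) :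
    ∀ (S : Finset (Set V)), (∀ C ∈ S, IsMaximalClique G C) → (∀ C ∈ S, C.Nonempty) →
    ∃ (e : ℕ → Set V) (p : ℕ → V),
      (∀ i, i < S.card → e i ∈ S) ∧
      (∀ C ∈ S, ∃ i, i < S.card ∧ e i = C) ∧
      (∀ i j, i < j → j < S.card → e i ≠ e j) ∧
      (∀ i, i + 1 < S.card → p i ∈ e (i + 1) ∧ ∀ j ≤ i, p i ∉ e j) := by
  classical
  intro S
  induction S using Finset.strongInduction with
  | _ S ihS =>
    intro hmax hne
    rcases S.eq_empty_or_nonempty with rfl | hSne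
    · exact ⟨fun _ => ∅, fun _ => Classical.arbitrary V, by simp, by simp, by simp, by simp⟩
    · obtain ⟨C, hCS, x, hxC, hxpriv⟩ := exists_private_vertex hG S hmax hne hSne
      set T := S.erase C with hT
      have hTsub : T ⊂ S := Finset.erase_ssubset hCS
      obtain ⟨e', p', h1, h2, h3, h4⟩ := ihS T hTsub
        (fun D hD => hmax D (Finset.mem_of_mem_erase hD))
        (fun D hD => hne D (Finset.mem_of_mem_erase hD))
      set m := S.card with hm
      have hmT : T.card = m - 1 := by
        rw [hT, Finset.card_erase_of_mem hCS]
      have hm1 : 1 ≤ m := Finset.card_pos.mpr hSne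
      refine ⟨fun i => if i < m - 1 then e' i else C,
        fun i => if i + 1 < m - 1 then p' i else x, ?_, ?_, ?_, ?_⟩
      · intro i him
        beta_reduce
        by_cases h : i < m - 1
        · rw [if_pos h]
          exact Finset.mem_of_mem_erase (h1 i (by omega))
        · rw [if_neg h]
          exact hCS
      · intro C' hC'
        beta_reduce
        by_cases h : C' = C
        · exact ⟨m - 1, by omega, by rw [if_neg (by omega)]; exact h.symm⟩
        · obtain ⟨i, hi, hei⟩ := h2 C' (Finset.mem_erase.mpr ⟨h, hC'⟩)
          exact ⟨i, by omega, by rw [if_pos (by omega)]; exact hei⟩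
      · intro i j hij hjm
        beta_reduce
        by_cases hj : j < m - 1
        · rw [if_pos (by omega), if_pos hj]
          exact h3 i j hij (by omega)
        · rw [if_pos (by omega : i < m - 1), if_neg hj]
          intro hcon
          exact (Finset.mem_erase.mp (h1 i (by omega))).1 hcon
      · intro i him
        beta_reduce
        by_cases h : i + 1 < m - 1
        · rw [if_pos h, if_pos h]
          obtain ⟨ha, hb⟩ := h4 i (by omega)
          refine ⟨ha, ?_⟩
          intro j hji
          rw [if_pos (by omega)]
          exact hb j hji
        · rw [if_neg h, if_neg (by omega : ¬ (i + 1 < m - 1))]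
          refine ⟨hxC, ?_⟩
          intro j hji
          rw [if_pos (by omega)]
          have hmem := h1 j (by omega)
          exact hxpriv (e' j) (Finset.mem_of_mem_erase hmem)
            (Finset.mem_erase.mp hmem).1

lemma construct [Fintype V] (G : SimpleGraph V) (hG : Chordal G)
    (𝒞 : Finset (Set V)) (hcov : IsEdgeCliqueCover G 𝒞)
    (hmax : ∀ C ∈ 𝒞, IsMaximalClique G C)
    (hne : ∀ C ∈ 𝒞, C.Nonempty)
    (h𝒞 : 𝒞.Nonempty)
    (k : ℕ) (z : V ⊕ Fin k) (hz : ∀ u, z = Sum.inl u → ∀ C ∈ 𝒞, u ∉ C) :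
    ∃ A : (V ⊕ Fin k) → (V ⊕ Fin k) → Prop,
      Digraph.Acyclic A ∧ competitionGraph A = addIsolated G k ∧
      ∃ w : {C // C ∈ 𝒞} → V ⊕ Fin k, Function.Injective w ∧
        (∀ C : {C // C ∈ 𝒞}, ∀ v ∈ (C : Set V), A (Sum.inl v) (w C)) ∧
        {x | ∃ u, A u x} = Set.range w := by
  classical
  haveI : Nonempty V := by
    obtain ⟨C, hC⟩ := h𝒞
    obtain ⟨x, _⟩ := hne C hC
    exact ⟨x⟩
  obtain ⟨e, p, he1, he2, he3, hp⟩ := greedy_order hG 𝒞 hmax hne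
  set m := 𝒞.card with hm
  have hm1 : 1 ≤ m := Finset.card_pos.mpr h𝒞
  set w' : ℕ → V ⊕ Fin k := fun i => if i + 1 < m then Sum.inl (p i) else z with hw'
  have hw'mem : ∀ i u, i < m → w' i = Sum.inl u → ∀ j, j ≤ i → j < m → u ∉ e j := by
    intro i u him hiu j hji hjm
    by_cases h : i + 1 < m
    · rw [hw'] at hiu
      simp only [if_pos h] at hiu
      exact (Sum.inl.inj hiu) ▸ (hp i h).2 j hji
    · rw [hw'] at hiu
      simp only [if_neg h] at hiu
      exact hz u hiu (e j) (he1 j hjm)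
  have hw'inj : ∀ i j, i < m → j < m → w' i = w' j → i = j := by
    have key : ∀ i j, i < j → j < m → w' i ≠ w' j := by
      intro i j hij hjm heq
      by_cases hi : i + 1 < m
      · have hpi : w' i = Sum.inl (p i) := by simp only [hw', if_pos hi]
        have : p i ∉ e (i + 1) :=
          hw'mem j (p i) hjm (heq ▸ hpi) (i + 1) (by omega) (by omega)
        exact this (hp i hi).1
      · have : i + 1 = m := by omega
        omega
    intro i j him hjm heq
    rcases lt_trichotomy i j with h | h | h
    · exact absurd heq (key i j h hjm)
    · exact h
    · exact absurd heq.symm (key j i h him)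
  set Arel : (V ⊕ Fin k) → (V ⊕ Fin k) → Prop :=
    fun x y => ∃ i, i < m ∧ (∃ v ∈ e i, x = Sum.inl v) ∧ y = w' i with hArel
  have harcs : ∀ i, i < m → ∀ v ∈ e i, Arel (Sum.inl v) (w' i) :=
    fun i him v hv => ⟨i, him, ⟨v, hv, rfl⟩, rfl⟩
  set g : (V ⊕ Fin k) → ℕ :=
    fun y => (Finset.range m).sup (fun i => if w' i = y then i + 1 else 0) with hg
  have hgval : ∀ i, i < m → g (w' i) = i + 1 := by
    intro i him
    apply le_antisymm
    · apply Finset.sup_le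
      intro j hj
      split_ifs with h
      · rw [hw'inj j i (Finset.mem_range.mp hj) him h]
      · omega
    · have hi : i ∈ Finset.range m := Finset.mem_range.mpr him
      have := Finset.le_sup (f := fun j => if w' j = w' i then j + 1 else 0) hi
      beta_reduce at this
      rwa [if_pos rfl] at this
  have hmono : ∀ x y, Arel x y → g x < g y := by
    rintro x y ⟨i, him, ⟨v, hvi, hxv⟩, hyw⟩
    rw [hyw, hgval i him, hxv]
    rw [hg]
    beta_reduce
    rw [Finset.sup_lt_iff (by rw [Nat.bot_eq_zero]; omega : (⊥ : ℕ) < i + 1)]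
    intro j hj
    split_ifs with h
    · have hje := hw'mem j v (Finset.mem_range.mp hj) h
      by_contra hge
      exact hje i (by omega) him hvi
    · omega
  have hacyc : Digraph.Acyclic Arel := acyclic_of_measure g hmono
  have hcg : competitionGraph Arel = addIsolated G k := by
    ext x y
    show (x ≠ y ∧ ∃ zz, Arel x zz ∧ Arel y zz) ↔ _
    constructor
    · rintro ⟨hxy, zz, ⟨i, him, ⟨v1, hv1, hx1⟩, hz1⟩, ⟨j, hjm, ⟨v2, hv2, hx2⟩, hz2⟩⟩
      have hij : i = j := hw'inj i j him hjm (hz1.symm.trans hz2)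
      subst hij
      have hcl := hcov.1 (e i) (he1 i him)
      refine ⟨v1, v2, ?_, hx1, hx2⟩
      refine hcl hv1 hv2 ?_
      intro h
      exact hxy (hx1.trans ((h ▸ hx2).symm))
    · rintro ⟨u, v, huv, hx, hy⟩
      obtain ⟨C, hC, huC, hvC⟩ := hcov.2 u v huv
      obtain ⟨i, him, hei⟩ := he2 C hC
      refine ⟨?_, w' i, ⟨i, him, ⟨u, hei ▸ huC, hx⟩, rfl⟩, ⟨i, him, ⟨v, hei ▸ hvC, hy⟩, rfl⟩⟩
      rw [hx, hy]
      intro h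
      exact G.loopless.irrefl u ((Sum.inl.inj h) ▸ huv)
  have heinj : ∀ i j, i < m → j < m → e i = e j → i = j := by
    intro i j him hjm heq
    rcases lt_trichotomy i j with h | h | h
    · exact absurd heq (he3 i j h hjm)
    · exact h
    · exact absurd heq.symm (he3 j i h him)
  set idx : {C // C ∈ 𝒞} → ℕ := fun C => (he2 C.1 C.2).choose with hidx
  have hidx1 : ∀ C, idx C < m := fun C => (he2 C.1 C.2).choose_spec.1
  have hidx2 : ∀ C, e (idx C) = C.1 := fun C => (he2 C.1 C.2).choose_spec.2
  refine ⟨Arel, hacyc, hcg, fun C => w' (idx C), ?_, ?_, ?_⟩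
  · intro C1 C2 heq
    have := hw'inj _ _ (hidx1 C1) (hidx1 C2) heq
    apply Subtype.ext
    rw [← hidx2 C1, ← hidx2 C2, this]
  · intro C v hv
    exact harcs (idx C) (hidx1 C) v (by rw [hidx2 C]; exact hv)
  · ext x
    constructor
    · rintro ⟨u, i, him, -, hx⟩
      have hCmem : e i ∈ 𝒞 := he1 i him
      refine ⟨⟨e i, hCmem⟩, ?_⟩
      have : idx ⟨e i, hCmem⟩ = i :=
        heinj _ _ (hidx1 ⟨e i, hCmem⟩) him (hidx2 ⟨e i, hCmem⟩)
      show w' (idx ⟨e i, hCmem⟩) = x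
      rw [this]
      exact hx.symm
    · rintro ⟨C, rfl⟩
      obtain ⟨v, hv⟩ := hne C.1 C.2
      exact ⟨Sum.inl v, harcs (idx C) (hidx1 C) v (by rw [hidx2 C]; exact hv)⟩

lemma cover_edge_pair [Fintype V] {G : SimpleGraph V} {𝒞 : Finset (Set V)}
    (hcov : IsEdgeCliqueCover G 𝒞) (hmin : 𝒞.card = eccNumber G) :
    ∀ C ∈ 𝒞, ∃ u v, u ∈ C ∧ v ∈ C ∧ G.Adj u v := by
  classical
  intro C hC
  by_contra hcon
  push_neg at hcon
  have hcov' : IsEdgeCliqueCover G (𝒞.erase C) := by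
    constructor
    · intro D hD
      exact hcov.1 D (Finset.mem_of_mem_erase hD)
    · intro u v huv
      obtain ⟨D, hD, hu, hv⟩ := hcov.2 u v huv
      refine ⟨D, Finset.mem_erase.mpr ⟨?_, hD⟩, hu, hv⟩
      intro h
      exact hcon u v (h ▸ hu) (h ▸ hv) huv
  have hle : eccNumber G ≤ (𝒞.erase C).card := Nat.sInf_le ⟨𝒞.erase C, hcov', rfl⟩
  have hcards := Finset.card_erase_of_mem hC
  have hpos : 0 < 𝒞.card := Finset.card_pos.mpr ⟨C, hC⟩
  omega

end AuxDev

/-- every minimum edge clique cover of a chordal graph consisting of maximal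
cliques is an effective competition cover. -/
theorem stmt9 {V : Type*} [Fintype V] (G : SimpleGraph V) (hG : Chordal G)
    (𝒞 : Finset (Set V)) (hcov : IsEdgeCliqueCover G 𝒞) (hmin : 𝒞.card = eccNumber G)
    (hmax : ∀ C ∈ 𝒞, IsMaximalClique G C) :
    IsEffectiveCompetitionCover G 𝒞 := by
  classical
  by_cases hedge : ∃ u v, G.Adj u v
  · obtain ⟨u0, v0, huv0⟩ := hedge
    have h𝒞ne : 𝒞.Nonempty := by
      obtain ⟨C, hC, -⟩ := hcov.2 u0 v0 huv0
      exact ⟨C, hC⟩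
    have hpair := cover_edge_pair hcov hmin
    have hne : ∀ C ∈ 𝒞, C.Nonempty := by
      intro C hC
      obtain ⟨u, v, hu, -, -⟩ := hpair C hC
      exact ⟨u, hu⟩
    have hniso : ∀ z₀ : V, (∀ u, ¬ G.Adj z₀ u) → ∀ C ∈ 𝒞, z₀ ∉ C := by
      intro z₀ hz₀ C hC hzC
      obtain ⟨u, v, hu, hv, huv⟩ := hpair C hC
      have hcl := hcov.1 C hC
      rcases eq_or_ne u z₀ with h | h
      · exact hz₀ v (h ▸ huv)
      · exact hz₀ u (hcl hzC hu (Ne.symm h))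
    by_cases hiso : ∃ z₀ : V, ∀ u, ¬ G.Adj z₀ u
    · obtain ⟨z₀, hz₀⟩ := hiso
      obtain ⟨A, hac, hcg, w, hwi, hwa, hws⟩ :=
        construct G hG 𝒞 hcov hmax hne h𝒞ne (compNumber G) (Sum.inl z₀)
          (fun u hu C hC => (Sum.inl.inj hu) ▸ hniso z₀ hz₀ C hC)
      exact ⟨hcov, hmin, hmax, A, ⟨hac, hcg⟩, w, hwi, hwa, hws⟩
    · push_neg at hiso
      have h1mem : ∃ A : (V ⊕ Fin 1) → (V ⊕ Fin 1) → Prop, Realizes G 1 A := by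
        obtain ⟨A, hac, hcg, -⟩ :=
          construct G hG 𝒞 hcov hmax hne h𝒞ne 1 (Sum.inr 0)
            (fun u hu => (Sum.inr_ne_inl hu).elim)
        exact ⟨A, hac, hcg⟩
      have h0 : ¬ ∃ A : (V ⊕ Fin 0) → (V ⊕ Fin 0) → Prop, Realizes G 0 A := by
        rintro ⟨A, hac, hcg⟩
        haveI : Nonempty (V ⊕ Fin 0) := ⟨Sum.inl u0⟩
        obtain ⟨x, hx⟩ := exists_sink hac
        rcases x with u | i
        · obtain ⟨v, hv⟩ := hiso u
          have hadj : (addIsolated G 0).Adj (Sum.inl u) (Sum.inl v) := ⟨u, v, hv, rfl, rfl⟩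
          rw [← hcg] at hadj
          obtain ⟨-, zz, h1, -⟩ := hadj
          exact hx zz h1
        · exact i.elim0
      have hk1 : 1 ≤ compNumber G := by
        have hnem : {k | ∃ A : (V ⊕ Fin k) → (V ⊕ Fin k) → Prop, Realizes G k A}.Nonempty :=
          ⟨1, h1mem⟩
        have h2 : ∃ A : (V ⊕ Fin (compNumber G)) → (V ⊕ Fin (compNumber G)) → Prop,
            Realizes G (compNumber G) A := Nat.sInf_mem hnem
        by_contra h
        push_neg at h
        have h00 : compNumber G = 0 := by omega
        rw [h00] at h2
        exact h0 h2
      obtain ⟨A, hac, hcg, w, hwi, hwa, hws⟩ :=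
        construct G hG 𝒞 hcov hmax hne h𝒞ne (compNumber G) (Sum.inr ⟨0, hk1⟩)
          (fun u hu => (Sum.inr_ne_inl hu).elim)
      exact ⟨hcov, hmin, hmax, A, ⟨hac, hcg⟩, w, hwi, hwa, hws⟩
  · push_neg at hedge
    have hecc0 : eccNumber G = 0 :=
      Nat.sInf_eq_zero.mpr (Or.inl ⟨∅, ⟨by simp, fun u v h => absurd h (hedge u v)⟩, rfl⟩)
    have h𝒞e : 𝒞 = ∅ := Finset.card_eq_zero.mp (hmin.trans hecc0)
    subst h𝒞e
    refine ⟨hcov, hmin, hmax, fun _ _ => False, ⟨⟨?_, ?_⟩, ?_⟩⟩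
    · exact acyclic_of_measure (fun _ => 0) (fun _ _ h => h.elim)
    · ext x y
      constructor
      · rintro ⟨-, z, h, -⟩
        exact h.elim
      · rintro ⟨u, v, h, -, -⟩
        exact absurd h (hedge u v)
    · refine ⟨fun C => (Finset.notMem_empty _ C.2).elim, ?_, ?_, ?_⟩
      · intro C
        exact (Finset.notMem_empty _ C.2).elim
      · intro C
        exact (Finset.notMem_empty _ C.2).elim
      · ext x
        constructor
        · rintro ⟨u, h⟩
          exact h.elim
        · rintro ⟨C, -⟩
          exact (Finset.notMem_empty _ C.2).elim
end

section
/- Every diamond-free graph with at least one edge has an effective competition cover. -/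
section EffectiveCoverAux

open Relation Sum

/-- A finite nonempty finset has a top element w.r.t. any linear order relation. -/
lemma aux_exists_top {α : Type*} (s : α → α → Prop) (hls : IsLinearOrder α s)
    (t : Finset α) (ht : t.Nonempty) : ∃ m ∈ t, ∀ z ∈ t, s z m := by
  classical
  haveI := hls
  induction t using Finset.induction_on with
  | empty => simp at ht
  | @insert a t' ha ih =>
    rcases t'.eq_empty_or_nonempty with rfl | hne
    · refine ⟨a, Finset.mem_insert_self _ _, ?_⟩
      intro z hz
      rcases Finset.mem_insert.1 hz with rfl | h0
      · exact refl_of s z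
      · simp at h0
    · obtain ⟨m, hm, hmax⟩ := ih hne
      rcases total_of s m a with h | h
      · refine ⟨a, Finset.mem_insert_self _ _, ?_⟩
        intro z hz
        rcases Finset.mem_insert.1 hz with rfl | hz'
        · exact refl_of s z
        · exact trans_of s (hmax z hz') h
      · refine ⟨m, Finset.mem_insert_of_mem hm, ?_⟩
        intro z hz
        rcases Finset.mem_insert.1 hz with rfl | hz'
        · exact h
        · exact hmax z hz'

/-- Every clique extends to a maximal clique. -/
lemma aux_exists_max_clique {V : Type*} (G : SimpleGraph V) (K : Set V) (hK : G.IsClique K) :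
    ∃ M, IsMaximalClique G M ∧ K ⊆ M := by
  have hH : ∀ c ⊆ {D : Set V | G.IsClique D}, IsChain (· ⊆ ·) c → c.Nonempty →
      ∃ ub ∈ {D : Set V | G.IsClique D}, ∀ s ∈ c, s ⊆ ub := by
    intro c hcS hchain hcne
    refine ⟨⋃₀ c, ?_, fun t ht => Set.subset_sUnion_of_mem ht⟩
    intro x hx y hy hxy
    obtain ⟨s1, hs1, hx1⟩ := hx
    obtain ⟨s2, hs2, hy2⟩ := hy
    rcases eq_or_ne s1 s2 with rfl | hne
    · exact hcS hs1 hx1 hy2 hxy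
    · rcases hchain hs1 hs2 hne with h | h
      · exact hcS hs2 (h hx1) hy2 hxy
      · exact hcS hs1 hx1 (h hy2) hxy
  obtain ⟨M, hKM, hM⟩ := zorn_subset_nonempty {D : Set V | G.IsClique D} hH K hK
  exact ⟨M, ⟨hM.1, fun D hD hMD => Set.Subset.antisymm hMD (hM.2 hD hMD)⟩, hKM⟩

/-- In a diamond-free graph, an edge lies in a unique maximal clique. -/
lemma aux_unique_max_clique {V : Type*} {G : SimpleGraph V} (hdf : DiamondFree G)
    {u v : V} (huv : G.Adj u v) {C C' : Set V}
    (hC : IsMaximalClique G C) (hC' : IsMaximalClique G C')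
    (hu : u ∈ C) (hv : v ∈ C) (hu' : u ∈ C') (hv' : v ∈ C') : C = C' := by
  by_contra hne
  have hxex : ∃ x ∈ C, x ∉ C' := by
    by_contra h
    push_neg at h
    exact hne (hC.2 C' hC'.1 h)
  obtain ⟨x, hxC, hxC'⟩ := hxex
  have hyex : ∃ y ∈ C', ¬ G.Adj x y := by
    by_contra h
    push_neg at h
    have hclique : G.IsClique (insert x C') := by
      intro a ha b hb hab
      rcases ha with rfl | ha
      · rcases hb with rfl | hb
        · exact absurd rfl hab
        · exact h b hb
      · rcases hb with rfl | hb
        · exact (h a ha).symm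
        · exact hC'.1 ha hb hab
    have := hC'.2 _ hclique (Set.subset_insert _ _)
    exact hxC' (this ▸ Set.mem_insert x C')
  obtain ⟨y, hyC', hxy⟩ := hyex
  have hxu : x ≠ u := fun h => hxC' (h ▸ hu')
  have hxv : x ≠ v := fun h => hxC' (h ▸ hv')
  have hxOne : G.Adj x u := hC.1 hxC hu hxu
  have hxTwo : G.Adj x v := hC.1 hxC hv hxv
  have hyx : x ≠ y := fun h => hxC' (h ▸ hyC')
  have hyu : y ≠ u := fun h => hxy (h ▸ hxOne)
  have hyv : y ≠ v := fun h => hxy (h ▸ hxTwo)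
  have hyOne : G.Adj y u := (hC'.1 hyC' hu' hyu)
  have hyTwo : G.Adj y v := (hC'.1 hyC' hv' hyv)
  have huvne : u ≠ v := huv.ne
  refine hdf ⟨⟨![u, v, x, y], ?_⟩, ?_⟩
  · intro a b hab
    fin_cases a <;> fin_cases b <;> simp_all <;>
      first
        | rfl
        | (exact absurd hab.symm (by assumption))
        | (exact absurd hab (by assumption))
  · intro a b
    change G.Adj (![u, v, x, y] a) (![u, v, x, y] b) ↔ diamondGraph.Adj a b
    fin_cases a <;> fin_cases b <;>
      simp [diamondGraph, huv, huv.symm, hxOne, hxOne.symm, hxTwo, hxTwo.symm,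
        hyOne, hyOne.symm, hyTwo, hyTwo.symm, hxy, fun (h : G.Adj y x) => hxy h.symm] <;>
      first
        | exact fun h => hxy h.symm
        | decide

/-- Some realizer exists: each edge gets its own new common prey. -/
lemma aux_realizer_exists {V : Type*} [Fintype V] (G : SimpleGraph V) :
    ∃ k, ∃ A : (V ⊕ Fin k) → (V ⊕ Fin k) → Prop, Realizes G k A := by
  classical
  obtain ⟨m, ⟨e⟩⟩ := Finite.exists_equiv_fin {p : V × V // G.Adj p.1 p.2}
  refine ⟨m, fun x y => ∃ p : {p : V × V // G.Adj p.1 p.2},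
    y = Sum.inr (e p) ∧ (x = Sum.inl p.1.1 ∨ x = Sum.inl p.1.2), ?_, ?_⟩
  · have hstep : ∀ x y : V ⊕ Fin m, (∃ p : {p : V × V // G.Adj p.1 p.2},
        y = Sum.inr (e p) ∧ (x = Sum.inl p.1.1 ∨ x = Sum.inl p.1.2)) →
        (∃ u, x = Sum.inl u) ∧ ∃ i, y = Sum.inr i := by
      rintro x y ⟨p, rfl, h | h⟩
      · exact ⟨⟨_, h⟩, _, rfl⟩
      · exact ⟨⟨_, h⟩, _, rfl⟩
    intro v hv
    have key : ∀ a b : V ⊕ Fin m, Relation.TransGen (fun x y => ∃ p : {p : V × V // G.Adj p.1 p.2},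
        y = Sum.inr (e p) ∧ (x = Sum.inl p.1.1 ∨ x = Sum.inl p.1.2)) a b →
        (∃ u, a = Sum.inl u) ∧ ∃ i, b = Sum.inr i := by
      intro a b h
      induction h with
      | single h => exact hstep _ _ h
      | tail h1 h2 ih => exact ⟨ih.1, (hstep _ _ h2).2⟩
    obtain ⟨⟨u, hu⟩, i, hi⟩ := key v v hv
    rw [hu] at hi
    exact Sum.inl_ne_inr hi
  · apply SimpleGraph.ext
    funext x y
    apply propext
    constructor
    · rintro ⟨hne, z, ⟨p, rfl, hx⟩, ⟨q, hq, hy⟩⟩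
      have hpq : p = q := e.injective (Sum.inr.inj hq)
      subst hpq
      rcases hx with rfl | rfl <;> rcases hy with rfl | rfl
      · exact absurd rfl hne
      · exact ⟨p.1.1, p.1.2, p.2, rfl, rfl⟩
      · exact ⟨p.1.2, p.1.1, p.2.symm, rfl, rfl⟩
      · exact absurd rfl hne
    · rintro ⟨u, v, huv, rfl, rfl⟩
      refine ⟨by simpa using huv.ne, Sum.inr (e ⟨(u, v), huv⟩), ⟨⟨(u,v), huv⟩, rfl, Or.inl rfl⟩,
        ⟨⟨(u,v), huv⟩, rfl, Or.inr rfl⟩⟩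

/-- The digraph accompanying the cover of maximal cliques. -/
def auxA {V : Type*} (𝒞 : Finset (Set V)) {k : ℕ}
    (wf : {x // x ∈ 𝒞} → V ⊕ Fin k) : (V ⊕ Fin k) → (V ⊕ Fin k) → Prop :=
  fun x y => ∃ C : {x // x ∈ 𝒞}, y = wf C ∧ ∃ v ∈ (C : Set V), x = Sum.inl v

end EffectiveCoverAux

/-- every diamond-free graph with at least one edge has an effective
competition cover. -/
theorem stmt11 {V : Type*} [Fintype V] (G : SimpleGraph V) (hdf : DiamondFree G)
    (hedge : ∃ u v : V, G.Adj u v) :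
    ∃ 𝒞 : Finset (Set V), IsEffectiveCompetitionCover G 𝒞 := by
  classical
  -- an optimal realizer
  have hSne : {k | ∃ A : (V ⊕ Fin k) → (V ⊕ Fin k) → Prop, Realizes G k A}.Nonempty := by
    obtain ⟨k, A, hA⟩ := aux_realizer_exists G
    exact ⟨k, A, hA⟩
  obtain ⟨A₀, hacyc, hcg⟩ : ∃ A : (V ⊕ Fin (compNumber G)) → (V ⊕ Fin (compNumber G)) → Prop,
      Realizes G (compNumber G) A := Nat.sInf_mem hSne
  have hAdj : ∀ x y, (x ≠ y ∧ ∃ z, A₀ x z ∧ A₀ y z) ↔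
      (∃ u v, G.Adj u v ∧ x = Sum.inl u ∧ y = Sum.inl v) := by
    intro x y
    exact iff_of_eq (congrFun (congrFun (congrArg SimpleGraph.Adj hcg) x) y)
  have hcommon : ∀ x y, x ≠ y → ∀ z, A₀ x z → A₀ y z →
      ∃ u v, G.Adj u v ∧ x = Sum.inl u ∧ y = Sum.inl v :=
    fun x y hne z hx hy => (hAdj x y).1 ⟨hne, z, hx, hy⟩
  have hedge2arc : ∀ u v : V, G.Adj u v → ∃ z, A₀ (Sum.inl u) z ∧ A₀ (Sum.inl v) z :=
    fun u v h => ((hAdj _ _).2 ⟨u, v, h, rfl, rfl⟩).2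
  have hadjOf : ∀ u v : V, u ≠ v → ∀ z, A₀ (Sum.inl u) z → A₀ (Sum.inl v) z → G.Adj u v := by
    intro u v hne z h1 h2
    obtain ⟨a, b, hab, ha, hb⟩ := hcommon _ _ (fun h => hne (Sum.inl.inj h)) z h1 h2
    cases Sum.inl.inj ha
    cases Sum.inl.inj hb
    exact hab
  -- a linear extension of the acyclic digraph
  haveI hpo : IsPartialOrder (V ⊕ Fin (compNumber G)) (Relation.ReflTransGen A₀) :=
    { refl := fun a => Relation.ReflTransGen.refl
      trans := fun a b c hab hbc => hab.trans hbc
      antisymm := by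
        intro a b h1 h2
        rcases Relation.reflTransGen_iff_eq_or_transGen.1 h1 with rfl | t1
        · rfl
        · rcases Relation.reflTransGen_iff_eq_or_transGen.1 h2 with rfl | t2
          · rfl
          · exact absurd (t1.trans t2) (hacyc a) }
  obtain ⟨s, hls, hrs⟩ := extend_partialOrder (Relation.ReflTransGen A₀)
  haveI := hls
  have strans : ∀ {a b c}, s a b → s b c → s a c := fun h1 h2 => trans_of s h1 h2
  have santi : ∀ {a b}, s a b → s b a → a = b := fun h1 h2 => antisymm_of s h1 h2
  have hsA : ∀ x y, A₀ x y → s x y ∧ x ≠ y := by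
    intro x y h
    refine ⟨hrs _ _ (Relation.ReflTransGen.single h), ?_⟩
    rintro rfl
    exact hacyc x (Relation.TransGen.single h)
  -- the cover by maximal cliques containing an edge
  set 𝒞 : Finset (Set V) :=
    (Set.toFinite {C : Set V | IsMaximalClique G C ∧
      ∃ u v : V, G.Adj u v ∧ u ∈ C ∧ v ∈ C}).toFinset with h𝒞
  have hmem𝒞 : ∀ C : Set V, C ∈ 𝒞 ↔ (IsMaximalClique G C ∧
      ∃ u v : V, G.Adj u v ∧ u ∈ C ∧ v ∈ C) := by
    intro C
    rw [h𝒞, Set.Finite.mem_toFinset]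
    exact Iff.rfl
  have covC : ∀ u v : V, G.Adj u v → ∃ C, C ∈ 𝒞 ∧ u ∈ C ∧ v ∈ C := by
    intro u v h
    obtain ⟨M, hM, hKM⟩ := aux_exists_max_clique G {u, v}
      (SimpleGraph.isClique_pair.2 (fun _ => h))
    have hu : u ∈ M := hKM (by simp)
    have hv : v ∈ M := hKM (by simp)
    exact ⟨M, (hmem𝒞 M).2 ⟨hM, u, v, h, hu, hv⟩, hu, hv⟩
  have hcov : IsEdgeCliqueCover G 𝒞 := by
    constructor
    · intro C hC
      exact ((hmem𝒞 C).1 hC).1.1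
    · intro u v h
      obtain ⟨C, hC, hu, hv⟩ := covC u v h
      exact ⟨C, hC, hu, hv⟩
  -- 𝒞 is a minimum cover
  have hle : ∀ F : Finset (Set V), IsEdgeCliqueCover G F → 𝒞.card ≤ F.card := by
    intro F hF
    have hch : ∀ C : Set V, C ∈ 𝒞 → ∃ D, D ∈ F ∧ ∃ u v : V, G.Adj u v ∧
        u ∈ C ∧ v ∈ C ∧ u ∈ D ∧ v ∈ D := by
      intro C hC
      obtain ⟨hCmax, u, v, huv, hu, hv⟩ := (hmem𝒞 C).1 hC
      obtain ⟨D, hD, hu', hv'⟩ := hF.2 u v huv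
      exact ⟨D, hD, u, v, huv, hu, hv, hu', hv'⟩
    choose! D hDF hprop using hch
    refine Finset.card_le_card_of_injOn D (fun C hC => hDF C hC) ?_
    intro C1 hC1m C2 hC2m heq
    have hC1 : C1 ∈ 𝒞 := hC1m
    have hC2 : C2 ∈ 𝒞 := hC2m
    obtain ⟨u1, v1, h1, hu1C, hv1C, hu1D, hv1D⟩ := hprop C1 hC1
    obtain ⟨u2, v2, h2, hu2C, hv2C, hu2D, hv2D⟩ := hprop C2 hC2
    obtain ⟨M, hM, hDM⟩ := aux_exists_max_clique G (D C1) (hF.1 _ (hDF C1 hC1))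
    have e1 : C1 = M := aux_unique_max_clique hdf h1 ((hmem𝒞 C1).1 hC1).1 hM
      hu1C hv1C (hDM hu1D) (hDM hv1D)
    have e2 : C2 = M := by
      rw [heq] at hDM
      exact aux_unique_max_clique hdf h2 ((hmem𝒞 C2).1 hC2).1 hM
        hu2C hv2C (hDM hu2D) (hDM hv2D)
    rw [e1, e2]
  have hecc : 𝒞.card = eccNumber G := by
    have hne : {n | ∃ F : Finset (Set V), IsEdgeCliqueCover G F ∧ F.card = n}.Nonempty :=
      ⟨𝒞.card, 𝒞, hcov, rfl⟩
    obtain ⟨F₀, hF₀, hFc⟩ := Nat.sInf_mem hne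
    refine le_antisymm ?_ (Nat.sInf_le ⟨𝒞, hcov, rfl⟩)
    calc 𝒞.card ≤ F₀.card := hle F₀ hF₀
    _ = eccNumber G := hFc
  -- the prey sets
  set Z : Set V → Set (V ⊕ Fin (compNumber G)) := fun C =>
    {z | (∃ u v : V, u ≠ v ∧ u ∈ C ∧ v ∈ C ∧ A₀ (Sum.inl u) z ∧ A₀ (Sum.inl v) z) ∧
      ∀ x, A₀ x z → ∃ c ∈ C, x = Sum.inl c} with hZdef
  have hZmem : ∀ C z, z ∈ Z C ↔
      ((∃ u v : V, u ≠ v ∧ u ∈ C ∧ v ∈ C ∧ A₀ (Sum.inl u) z ∧ A₀ (Sum.inl v) z) ∧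
      ∀ x, A₀ x z → ∃ c ∈ C, x = Sum.inl c) := by
    intro C z
    rw [hZdef]
    exact Iff.rfl
  have hZin : ∀ C : Set V, IsMaximalClique G C → ∀ z, ∀ u v : V, u ≠ v → u ∈ C → v ∈ C →
      A₀ (Sum.inl u) z → A₀ (Sum.inl v) z → z ∈ Z C := by
    intro C hCmax z u v hne hu hv h1 h2
    have hK : G.IsClique {c : V | A₀ (Sum.inl c) z} := by
      intro c1 hc1 c2 hc2 hne12
      exact hadjOf c1 c2 hne12 z hc1 hc2
    obtain ⟨M, hM, hKM⟩ := aux_exists_max_clique G _ hK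
    have hMC : M = C := aux_unique_max_clique hdf (hadjOf u v hne z h1 h2) hM hCmax
      (hKM h1) (hKM h2) hu hv
    refine (hZmem C z).2 ⟨⟨u, v, hne, hu, hv, h1, h2⟩, ?_⟩
    intro x hx
    by_cases hxu : x = Sum.inl u
    · exact ⟨u, hu, hxu⟩
    · obtain ⟨a, b, hab, ha, hb⟩ := hcommon x (Sum.inl u) hxu z hx h1
      refine ⟨a, ?_, ha⟩
      have haM : a ∈ M := hKM (show A₀ (Sum.inl a) z from ha ▸ hx)
      rwa [hMC] at haM
  have hZne : ∀ C ∈ 𝒞, (Z C).Nonempty := by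
    intro C hC
    obtain ⟨hCmax, u, v, huv, hu, hv⟩ := (hmem𝒞 C).1 hC
    obtain ⟨z, h1, h2⟩ := hedge2arc u v huv
    exact ⟨z, hZin C hCmax z u v huv.ne hu hv h1 h2⟩
  have hZdisj : ∀ C, C ∈ 𝒞 → ∀ C', C' ∈ 𝒞 → ∀ z, z ∈ Z C → z ∈ Z C' → C = C' := by
    intro C hC C' hC' z h h'
    obtain ⟨⟨u, v, hne, hu, hv, h1, h2⟩, -⟩ := (hZmem C z).1 h
    obtain ⟨-, hsub⟩ := (hZmem C' z).1 h'
    obtain ⟨c1, hc1, hc1e⟩ := hsub _ h1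
    obtain ⟨c2, hc2, hc2e⟩ := hsub _ h2
    have hu' : u ∈ C' := by cases Sum.inl.inj hc1e; exact hc1
    have hv' : v ∈ C' := by cases Sum.inl.inj hc2e; exact hc2
    exact aux_unique_max_clique hdf (hadjOf u v hne z h1 h2)
      ((hmem𝒞 C).1 hC).1 ((hmem𝒞 C').1 hC').1 hu hv hu' hv'
  -- the prey vertices
  have hwex : ∀ C : {x // x ∈ 𝒞}, ∃ m, m ∈ Z (C : Set V) ∧ ∀ z ∈ Z (C : Set V), s z m := by
    intro C
    have hfinZ : (Z (C : Set V)).Finite := Set.toFinite _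
    obtain ⟨m, hm, hmax⟩ := aux_exists_top s hls hfinZ.toFinset
      (by rw [Set.Finite.toFinset_nonempty]; exact hZne _ C.2)
    exact ⟨m, hfinZ.mem_toFinset.1 hm, fun z hz => hmax z (hfinZ.mem_toFinset.2 hz)⟩
  choose wf hw1 hw2 using hwex
  have hwinj : Function.Injective wf := by
    intro C1 C2 h
    have h1 := hw1 C1
    rw [h] at h1
    exact Subtype.ext (hZdisj _ C1.2 _ C2.2 (wf C2) h1 (hw1 C2))
  have hother : ∀ C : Set V, C ∈ 𝒞 → ∀ v ∈ C, ∃ u ∈ C, u ≠ v := by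
    intro C hC v hv
    obtain ⟨-, u0, v0, h0, hu0, hv0⟩ := (hmem𝒞 C).1 hC
    by_cases h : v = u0
    · exact ⟨v0, hv0, fun e => h0.ne (h.symm.trans e.symm)⟩
    · exact ⟨u0, hu0, fun e => h e.symm⟩
  -- the accompanying digraph
  have hstep : ∀ x y, auxA 𝒞 wf x y → s x y ∧ x ≠ y := by
    rintro x y ⟨C, rfl, v, hvC, rfl⟩
    have hCm : (C : Set V) ∈ 𝒞 := C.2
    obtain ⟨u, huC, hune⟩ := hother _ hCm v hvC
    have hadjvu : G.Adj v u := ((hmem𝒞 _).1 hCm).1.1 hvC huC (fun e => hune e.symm)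
    obtain ⟨z, h1, h2⟩ := hedge2arc v u hadjvu
    have hzZ : z ∈ Z (C : Set V) :=
      hZin _ ((hmem𝒞 _).1 hCm).1 z v u (fun e => hune e.symm) hvC huC h1 h2
    have hs1 := hsA _ _ h1
    have hs2 : s z (wf C) := hw2 C z hzZ
    refine ⟨strans hs1.1 hs2, ?_⟩
    intro he
    rw [← he] at hs2
    exact hs1.2 (santi hs1.1 hs2)
  have hacyc' : Digraph.Acyclic (auxA 𝒞 wf) := by
    intro v hv
    have hlt : Relation.TransGen (fun a b => s a b ∧ a ≠ b) v v :=
      Relation.TransGen.mono (fun x y h => hstep x y h) v v hv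
    have htr : Transitive (fun a b : V ⊕ Fin (compNumber G) => s a b ∧ a ≠ b) := by
      intro a b c h1 h2
      refine ⟨strans h1.1 h2.1, ?_⟩
      intro he
      exact h1.2 (santi h1.1 (he ▸ h2.1))
    rw [@Relation.transGen_eq_self _ (fun a b => s a b ∧ a ≠ b) ⟨fun _ _ _ h1 h2 => htr h1 h2⟩] at hlt
    exact hlt.2 rfl
  have hcg' : competitionGraph (auxA 𝒞 wf) = addIsolated G (compNumber G) := by
    apply SimpleGraph.ext
    funext x y
    apply propext
    show (x ≠ y ∧ ∃ z, auxA 𝒞 wf x z ∧ auxA 𝒞 wf y z) ↔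
      (∃ u v, G.Adj u v ∧ x = Sum.inl u ∧ y = Sum.inl v)
    constructor
    · rintro ⟨hne, z, ⟨C, rfl, u, huC, rfl⟩, ⟨C', hC'e, v, hvC, rfl⟩⟩
      have hCC : C' = C := hwinj hC'e.symm
      subst hCC
      have hune : u ≠ v := fun e => hne (by rw [e])
      exact ⟨u, v, ((hmem𝒞 _).1 C'.2).1.1 huC hvC hune, rfl, rfl⟩
    · rintro ⟨u, v, huv, rfl, rfl⟩
      obtain ⟨C, hC, hu, hv⟩ := covC u v huv
      exact ⟨by simpa using huv.ne, wf ⟨C, hC⟩, ⟨⟨C, hC⟩, rfl, u, hu, rfl⟩,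
        ⟨⟨C, hC⟩, rfl, v, hv, rfl⟩⟩
  -- assemble
  refine ⟨𝒞, hcov, hecc, fun C hC => ((hmem𝒞 C).1 hC).1, auxA 𝒞 wf, ⟨hacyc', hcg'⟩,
    wf, hwinj, ?_, ?_⟩
  · intro C v hv
    exact ⟨C, rfl, v, hv, rfl⟩
  · ext x
    constructor
    · rintro ⟨u, C, rfl, -⟩
      exact ⟨C, rfl⟩
    · rintro ⟨C, rfl⟩
      obtain ⟨-, u, v, huv, hu, hv⟩ := (hmem𝒞 _).1 C.2
      exact ⟨Sum.inl u, C, rfl, u, hu, rfl⟩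
end
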